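/- arXiv:math/0406525 — 2 statements merged into one kernel-verified Lean document; each statement's English description precedes it below -/
import Mathlib

section
/- Let f : ℝ → ℝ have compact support and continuous q-th derivative. Let c_m = ∫ f(x) H_m(x) φ(x) dx be its Hermite coefficients. Then the Hermite coefficients of f^{(q)} satisfy c_m^{(q)} = c_{m+q} for all m ≥ 0, and consequently ∑_{m=0}^∞ c_{m+q}^2 / m! < ∞. -/
open MeasureTheory Polynomial

/-- Probabilists' Hermite polynomial of degree `n`, evaluated at a real `x`. -/
noncomputable def hermiteEval (n : ℕ) (x : ℝ) : ℝ := Polynomial.aeval x (Polynomial.hermite n)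

/-- Standard normal density. -/
noncomputable def stdGaussPDF (x : ℝ) : ℝ := (Real.sqrt (2 * Real.pi))⁻¹ * Real.exp (-x ^ 2 / 2)

/-- Real-coefficient Hermite polynomial. -/
noncomputable def HR (n : ℕ) : Polynomial ℝ := (Polynomial.hermite n).map (algebraMap ℤ ℝ)

lemma hermiteEval_eq (n : ℕ) (x : ℝ) : hermiteEval n x = (HR n).eval x := by
  simp [hermiteEval, HR, aeval_def, eval_map]

lemma HR_zero : HR 0 = 1 := by simp [HR, hermite_zero]

lemma HR_one : HR 1 = X := by simp [HR, hermite_one]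

lemma HR_succ (n : ℕ) : HR (n + 1) = X * HR n - derivative (HR n) := by
  simp [HR, hermite_succ, Polynomial.derivative_map]

lemma HR_deriv (n : ℕ) : derivative (HR (n + 1)) = C ((n : ℝ) + 1) * HR n := by
  induction n with
  | zero => simp [HR_one, HR_zero]
  | succ n ih =>
    have h2 : HR (n + 2) = X * HR (n + 1) - C ((n : ℝ) + 1) * HR n := by
      rw [HR_succ (n + 1), ih]
    have hC : C ((n : ℝ) + 1 + 1) = C ((n : ℝ) + 1) + 1 := by simp
    rw [show n + 1 + 1 = n + 2 from rfl, h2, derivative_sub, derivative_mul, derivative_X,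
      one_mul, ih, derivative_mul, derivative_C, zero_mul, zero_add]
    push_cast
    rw [hC]
    linear_combination (-(C ((n : ℝ) + 1))) * HR_succ n

lemma gauss_pos (x : ℝ) : 0 < stdGaussPDF x := by
  have : 0 < Real.sqrt (2 * Real.pi) := Real.sqrt_pos.2 (by positivity)
  exact mul_pos (inv_pos.2 this) (Real.exp_pos _)

lemma gauss_cont : Continuous stdGaussPDF := by
  unfold stdGaussPDF; fun_prop

lemma hasDerivAt_gauss (x : ℝ) : HasDerivAt stdGaussPDF (-x * stdGaussPDF x) x := by
  have h1 : HasDerivAt (fun y : ℝ => -y ^ 2 / 2) (-x) x := by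
    have := ((hasDerivAt_pow 2 x).neg).div_const 2
    simpa using this.congr_deriv (by ring)
  have h2 : HasDerivAt (fun y : ℝ => (Real.sqrt (2 * Real.pi))⁻¹ * Real.exp (-y ^ 2 / 2))
      ((Real.sqrt (2 * Real.pi))⁻¹ * (Real.exp (-x ^ 2 / 2) * (-x))) x := (h1.exp).const_mul _
  have he : -x * stdGaussPDF x
      = (Real.sqrt (2 * Real.pi))⁻¹ * (Real.exp (-x ^ 2 / 2) * (-x)) := by
    simp [stdGaussPDF]; ring
  rw [he]
  exact h2

lemma integrable_poly_gauss (P : Polynomial ℝ) :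
    Integrable fun x : ℝ => P.eval x * stdGaussPDF x := by
  have hpow : ∀ k : ℕ, Integrable fun x : ℝ => x ^ k * stdGaussPDF x := by
    intro k
    have h := integrable_rpow_mul_exp_neg_mul_sq (b := (1:ℝ)/2) (by norm_num) (s := (k : ℝ))
      (by linarith [Nat.cast_nonneg (α := ℝ) k])
    have h2 : Integrable fun x : ℝ => x ^ k * Real.exp (-x ^ 2 / 2) := by
      have : (fun x : ℝ => x ^ k * Real.exp (-x ^ 2 / 2))
          = fun x : ℝ => x ^ (k : ℝ) * Real.exp (-(1/2) * x ^ 2) := by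
        funext x; rw [Real.rpow_natCast]; ring_nf
      rw [this]; exact h
    have := h2.const_mul (Real.sqrt (2 * Real.pi))⁻¹
    apply this.congr
    filter_upwards with x
    simp [stdGaussPDF]; ring
  induction P using Polynomial.induction_on' with
  | add p q hp hq =>
    have := hp.add hq
    apply this.congr
    filter_upwards with x
    simp [add_mul]
  | monomial n a =>
    have := (hpow n).const_mul a
    apply this.congr
    filter_upwards with x
    simp [Polynomial.eval_monomial]; ring

lemma hermite_succ_eval (n : ℕ) (x : ℝ) :
    hermiteEval (n + 1) x = x * hermiteEval n x - (derivative (HR n)).eval x := by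
  simp [hermiteEval_eq, HR_succ]

lemma hasDerivAt_hermite_gauss (m : ℕ) (x : ℝ) :
    HasDerivAt (fun y => hermiteEval m y * stdGaussPDF y)
      (-(hermiteEval (m + 1) x * stdGaussPDF x)) x := by
  have h1 : HasDerivAt (fun y => hermiteEval m y) ((derivative (HR m)).eval x) x := by
    simp only [hermiteEval_eq]
    exact (HR m).hasDerivAt x
  have h2 := h1.mul (hasDerivAt_gauss x)
  have he : -(hermiteEval (m + 1) x * stdGaussPDF x)
      = (derivative (HR m)).eval x * stdGaussPDF x + hermiteEval m x * (-x * stdGaussPDF x) := by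
    rw [hermite_succ_eval]; ring
  rw [he]; exact h2

lemma integrable_hermite_mul_gauss (p : Polynomial ℝ) (m : ℕ) :
    Integrable fun x : ℝ => p.eval x * (hermiteEval m x * stdGaussPDF x) := by
  have := integrable_poly_gauss (p * HR m)
  apply this.congr
  filter_upwards with x
  simp [hermiteEval_eq]; ring

/-- Integration by parts against `H m * φ`. -/
lemma ibp (u u' : ℝ → ℝ) (hu : ∀ x, HasDerivAt u (u' x) x) (m : ℕ)
    (h1 : Integrable fun x => u x * (hermiteEval (m + 1) x * stdGaussPDF x))
    (h2 : Integrable fun x => u' x * (hermiteEval m x * stdGaussPDF x))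
    (h3 : Integrable fun x => u x * (hermiteEval m x * stdGaussPDF x)) :
    ∫ x, u x * (hermiteEval (m + 1) x * stdGaussPDF x)
      = ∫ x, u' x * (hermiteEval m x * stdGaussPDF x) := by
  have key := integral_mul_deriv_eq_deriv_mul_of_integrable
    (u := u) (u' := u') (v := fun x => hermiteEval m x * stdGaussPDF x)
    (v' := fun x => -(hermiteEval (m + 1) x * stdGaussPDF x))
    (fun x _ => hu x) (fun x _ => hasDerivAt_hermite_gauss m x) ?_ ?_ ?_
  · have : (∫ x, u x * -(hermiteEval (m + 1) x * stdGaussPDF x))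
        = -∫ x, u x * (hermiteEval (m + 1) x * stdGaussPDF x) := by
      rw [← integral_neg]; congr 1; funext x; ring
    rw [this] at key
    linarith [key]
  · apply h1.neg.congr; filter_upwards with x
    show -(u x * (hermiteEval (m + 1) x * stdGaussPDF x)) = u x * -(hermiteEval (m + 1) x * stdGaussPDF x)
    ring
  · exact h2
  · exact h3

lemma integral_gauss_one : ∫ x, stdGaussPDF x = 1 := by
  have h : ∫ x : ℝ, Real.exp (-(1/2 : ℝ) * x ^ 2) = Real.sqrt (Real.pi / (1/2)) :=
    integral_gaussian (1/2)
  have h2 : ∫ x, stdGaussPDF x = (Real.sqrt (2 * Real.pi))⁻¹ * Real.sqrt (Real.pi / (1/2)) := by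
    rw [← h, ← integral_const_mul]
    congr 1; funext x; rw [stdGaussPDF]; ring_nf
  rw [h2, show Real.pi / (1/2) = 2 * Real.pi by ring]
  rw [inv_mul_cancel₀ (by positivity)]

lemma integral_hermite_gauss (m : ℕ) :
    ∫ x, hermiteEval (m + 1) x * stdGaussPDF x = 0 := by
  have h := ibp (fun _ => 1) (fun _ => 0) (fun x => hasDerivAt_const x 1) m ?_ ?_ ?_
  · simpa using h
  · simpa using integrable_hermite_mul_gauss 1 (m + 1)
  · simpa using (integrable_hermite_mul_gauss 1 m).congr
      (by filter_upwards with x; simp)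
  · simpa using integrable_hermite_mul_gauss 1 m

lemma orth : ∀ n m : ℕ, (∫ x, hermiteEval n x * (hermiteEval m x * stdGaussPDF x))
    = if n = m then (n.factorial : ℝ) else 0 := by
  intro n
  induction n with
  | zero =>
    intro m
    have h0 : ∀ x : ℝ, hermiteEval 0 x = 1 := by intro x; simp [hermiteEval_eq, HR_zero]
    cases m with
    | zero => simp only [h0]; simpa using integral_gauss_one
    | succ m =>
      simp only [h0, one_mul]
      rw [integral_hermite_gauss m]
      simp
  | succ n ih =>
    intro m
    cases m with
    | zero =>
      have h0 : ∀ x : ℝ, hermiteEval 0 x = 1 := by intro x; simp [hermiteEval_eq, HR_zero]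
      have : (∫ x, hermiteEval (n+1) x * (hermiteEval 0 x * stdGaussPDF x))
          = ∫ x, hermiteEval (n+1) x * stdGaussPDF x := by
        congr 1; funext x; rw [h0]; ring
      rw [this, integral_hermite_gauss n]
      simp
    | succ m =>
      have hu : ∀ x : ℝ, HasDerivAt (fun y => hermiteEval (n+1) y)
          (((n : ℝ) + 1) * hermiteEval n x) x := by
        intro x
        have h1 : HasDerivAt (fun y => hermiteEval (n+1) y) ((derivative (HR (n+1))).eval x) x := by
          simp only [hermiteEval_eq]; exact (HR (n+1)).hasDerivAt x
        rwa [HR_deriv, eval_mul, eval_C, ← hermiteEval_eq] at h1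
      have key := ibp (fun x => hermiteEval (n+1) x) (fun x => ((n : ℝ) + 1) * hermiteEval n x)
        hu m ?_ ?_ ?_
      · rw [key]
        have : (∫ x, ((n : ℝ) + 1) * hermiteEval n x * (hermiteEval m x * stdGaussPDF x))
            = ((n : ℝ) + 1) * ∫ x, hermiteEval n x * (hermiteEval m x * stdGaussPDF x) := by
          rw [← integral_const_mul]; congr 1; funext x; ring
        rw [this, ih m]
        by_cases h : n = m
        · subst h; simp only [if_pos rfl, Nat.factorial_succ]; push_cast; ring
        · have h2 : ¬ (n + 1 = m + 1) := by omega
          simp [h, h2]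
      · exact integrable_hermite_mul_gauss (HR (n+1)) (m+1) |>.congr
          (by filter_upwards with x; simp only [← hermiteEval_eq])
      · exact ((integrable_hermite_mul_gauss (HR n) m).const_mul ((n:ℝ)+1)).congr
          (by filter_upwards with x; simp only [← hermiteEval_eq]; ring)
      · exact integrable_hermite_mul_gauss (HR (n+1)) m |>.congr
          (by filter_upwards with x; simp only [← hermiteEval_eq])

lemma cont_hermiteEval (m : ℕ) : Continuous fun x : ℝ => hermiteEval m x := by
  simp only [hermiteEval_eq]; exact (HR m).continuous_aeval

lemma integrable_cpt (u : ℝ → ℝ) (hc : Continuous u) (hs : HasCompactSupport u) (k : ℕ) :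
    Integrable fun x => u x * (hermiteEval k x * stdGaussPDF x) := by
  apply Continuous.integrable_of_hasCompactSupport
  · exact hc.mul ((cont_hermiteEval k).mul gauss_cont)
  · exact hs.mul_right

lemma coeff_shift : ∀ (q : ℕ) (f : ℝ → ℝ), HasCompactSupport f → ContDiff ℝ (q : ℕ∞) f →
    ∀ m, (∫ x, iteratedDeriv q f x * (hermiteEval m x * stdGaussPDF x))
      = ∫ x, f x * (hermiteEval (m + q) x * stdGaussPDF x) := by
  intro q
  induction q with
  | zero => intro f _ _ m; simp [iteratedDeriv_zero]
  | succ q ih =>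
    intro f hs hd m
    have hd' : ContDiff ℝ ((q : ℕ∞) + 1) f := by exact_mod_cast hd
    have hdf : Differentiable ℝ f := hd'.differentiable (by simp)
    have hg : ContDiff ℝ (q : ℕ∞) (deriv f) := by
      have := (contDiff_succ_iff_deriv.mp (by exact_mod_cast hd' :
        ContDiff ℝ ((q : WithTop ℕ∞) + 1) f)).2.2
      exact_mod_cast this
    have hgc : Continuous (deriv f) := hg.continuous
    rw [iteratedDeriv_succ', ih (deriv f) hs.deriv hg m]
    have key := ibp f (deriv f) (fun x => (hdf x).hasDerivAt) (m + q)
      (integrable_cpt f hd'.continuous hs (m + q + 1))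
      (integrable_cpt (deriv f) hgc hs.deriv (m + q))
      (integrable_cpt f hd'.continuous hs (m + q))
    rw [show m + (q + 1) = (m + q) + 1 from rfl]
    exact key.symm

lemma hcs_iteratedDeriv (f : ℝ → ℝ) (hs : HasCompactSupport f) (n : ℕ) :
    HasCompactSupport (iteratedDeriv n f) := by
  induction n with
  | zero => simpa [iteratedDeriv_zero] using hs
  | succ n ih => rw [iteratedDeriv_succ]; exact ih.deriv


/-- For `f` of compact support with continuous `q`-th derivative, the Hermite coefficients
of `f^{(q)}` satisfy `c_m^{(q)} = c_{m+q}`, and `∑ c_{m+q}^2 / m! < ∞`. -/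
theorem stmt_4 (f : ℝ → ℝ) (q : ℕ) (hsupp : HasCompactSupport f)
    (hsmooth : ContDiff ℝ (q : ℕ∞) f)
    (c : ℕ → ℝ) (hc : ∀ m, c m = ∫ x, f x * hermiteEval m x * stdGaussPDF x) :
    (∀ m : ℕ, ∫ x, iteratedDeriv q f x * hermiteEval m x * stdGaussPDF x = c (m + q)) ∧
      Summable (fun m : ℕ => c (m + q) ^ 2 / (m.factorial : ℝ)) := by

  have part1 : ∀ m : ℕ, ∫ x, iteratedDeriv q f x * hermiteEval m x * stdGaussPDF x = c (m + q) := by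
    intro m
    rw [hc (m + q)]
    simp_rw [mul_assoc]
    exact coeff_shift q f hsupp hsmooth m
  refine ⟨part1, ?_⟩
  set g : ℝ → ℝ := iteratedDeriv q f with hg_def
  set d : ℕ → ℝ := fun m => c (m + q) with hd_def
  have hgd : ∀ m, (∫ x, g x * (hermiteEval m x * stdGaussPDF x)) = d m := by
    intro m
    show _ = c (m + q)
    rw [← part1 m]
    simp_rw [mul_assoc]
  have hgc : Continuous g := hsmooth.continuous_iteratedDeriv q (by exact_mod_cast le_rfl)
  have hgs : HasCompactSupport g := hcs_iteratedDeriv f hsupp q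
  set A : ℝ := ∫ x, g x ^ 2 * stdGaussPDF x with hA
  have bound : ∀ n : ℕ, (∑ m ∈ Finset.range n, d m ^ 2 / (m.factorial : ℝ)) ≤ A := by
    intro n
    set a : ℕ → ℝ := fun m => d m / (m.factorial : ℝ) with ha
    set Q : Polynomial ℝ := ∑ m ∈ Finset.range n, Polynomial.C (a m) * HR m with hQdef
    have hQ : ∀ x : ℝ, Q.eval x = ∑ m ∈ Finset.range n, a m * hermiteEval m x := by
      intro x
      rw [hQdef, eval_finset_sum]
      exact Finset.sum_congr rfl fun m _ => by rw [eval_mul, eval_C, hermiteEval_eq]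
    -- integrability facts
    have I1 : Integrable fun x => g x ^ 2 * stdGaussPDF x := by
      apply Continuous.integrable_of_hasCompactSupport ((hgc.pow 2).mul gauss_cont)
      have : (fun x => g x ^ 2 * stdGaussPDF x) = fun x => g x * (g x * stdGaussPDF x) := by
        funext x; ring
      rw [pow_two, mul_assoc]; exact hgs.mul_right
    have I2 : ∀ m : ℕ, Integrable fun x => g x * (hermiteEval m x * stdGaussPDF x) :=
      fun m => integrable_cpt g hgc hgs m
    have I3 : Integrable fun x => g x * (Q.eval x * stdGaussPDF x) := by
      apply Continuous.integrable_of_hasCompactSupport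
        (hgc.mul (Q.continuous_aeval.mul gauss_cont)) hgs.mul_right
    have I4 : Integrable fun x => Q.eval x ^ 2 * stdGaussPDF x := by
      apply (integrable_poly_gauss (Q * Q)).congr
      filter_upwards with x
      simp only [eval_mul]; ring
    -- value of the cross term
    have hcross : (∫ x, g x * (Q.eval x * stdGaussPDF x))
        = ∑ m ∈ Finset.range n, d m ^ 2 / (m.factorial : ℝ) := by
      have hfun : (fun x => g x * (Q.eval x * stdGaussPDF x))
          = fun x => ∑ m ∈ Finset.range n, a m * (g x * (hermiteEval m x * stdGaussPDF x)) := by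
        funext x
        rw [hQ, Finset.sum_mul, Finset.mul_sum]
        apply Finset.sum_congr rfl
        intro m _; ring
      rw [hfun, integral_finset_sum _ (fun m _ => (I2 m).const_mul (a m))]
      apply Finset.sum_congr rfl
      intro m _
      rw [integral_const_mul, hgd m, ha]
      have hm : (m.factorial : ℝ) ≠ 0 := by positivity
      field_simp
    -- value of the square term
    have hsq : (∫ x, Q.eval x ^ 2 * stdGaussPDF x)
        = ∑ m ∈ Finset.range n, d m ^ 2 / (m.factorial : ℝ) := by
      have hfun : (fun x => Q.eval x ^ 2 * stdGaussPDF x)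
          = fun x => ∑ m ∈ Finset.range n, ∑ k ∈ Finset.range n,
              a m * (a k * (hermiteEval m x * (hermiteEval k x * stdGaussPDF x))) := by
        funext x
        rw [hQ, sq, Finset.sum_mul_sum, Finset.sum_mul]
        apply Finset.sum_congr rfl
        intro m _
        rw [Finset.sum_mul]
        apply Finset.sum_congr rfl
        intro k _; ring
      have Imk : ∀ m k : ℕ, Integrable fun x =>
          a m * (a k * (hermiteEval m x * (hermiteEval k x * stdGaussPDF x))) := by
        intro m k
        apply (((integrable_hermite_mul_gauss (HR m) k).congr
          (by filter_upwards with x; simp only [← hermiteEval_eq])).const_mul (a k)).const_mul (a m)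
      rw [hfun, integral_finset_sum _ (fun m _ => integrable_finset_sum _ (fun k _ => Imk m k))]
      apply Finset.sum_congr rfl
      intro m hm
      rw [integral_finset_sum _ (fun k _ => Imk m k)]
      have : ∀ k ∈ Finset.range n,
          (∫ x, a m * (a k * (hermiteEval m x * (hermiteEval k x * stdGaussPDF x))))
            = a m * (a k * if m = k then (m.factorial : ℝ) else 0) := by
        intro k _
        rw [integral_const_mul, integral_const_mul, orth m k]
      rw [Finset.sum_congr rfl this]
      rw [Finset.sum_eq_single m]
      · rw [if_pos rfl, ha]
        have hm0 : (m.factorial : ℝ) ≠ 0 := by positivity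
        field_simp
      · intro k _ hk; rw [if_neg (fun h => hk h.symm)]; ring
      · intro h; exact absurd hm h
    -- positivity of the squared error
    have hpos : 0 ≤ ∫ x, (g x - Q.eval x) ^ 2 * stdGaussPDF x := by
      apply integral_nonneg
      intro x
      have := (gauss_pos x).le
      positivity
    have hexpand : (∫ x, (g x - Q.eval x) ^ 2 * stdGaussPDF x)
        = A - 2 * (∫ x, g x * (Q.eval x * stdGaussPDF x)) + ∫ x, Q.eval x ^ 2 * stdGaussPDF x := by
      have hfun : (fun x => (g x - Q.eval x) ^ 2 * stdGaussPDF x)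
          = fun x => (g x ^ 2 * stdGaussPDF x - 2 * (g x * (Q.eval x * stdGaussPDF x)))
              + Q.eval x ^ 2 * stdGaussPDF x := by
        funext x; ring
      have I3' : Integrable fun x => 2 * (g x * (Q.eval x * stdGaussPDF x)) := I3.const_mul 2
      have I13 : Integrable fun x =>
          g x ^ 2 * stdGaussPDF x - 2 * (g x * (Q.eval x * stdGaussPDF x)) := I1.sub I3'
      rw [hfun, integral_add I13 I4, integral_sub I1 I3', integral_const_mul, hA]
    rw [hexpand, hcross, hsq] at hpos
    linarith
  apply summable_of_sum_range_le (c := A)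
  · intro m
    have : (0:ℝ) < m.factorial := by positivity
    positivity
  · intro n
    exact bound n
end

section
/- In the setting of pairing counts underlying the diagram formula: the number of products in the Hermite diagram expansion with exactly r pairings of components of A_i with components of A_j is bounded above by (a_0! / ∏_k a[k]!)^2 · (m + a_0)! / (r! (a_0 - r)! (a_0 - r)! (m - a_0 + r)!), for max(a_0 - m, 0) ≤ r ≤ a_0. -/
open Finset

section General
variable {β : Type*} [Fintype β] [DecidableEq β] {n : ℕ} (c : β → ℕ)

noncomputable def fiberEmb
    (f : {f : Fin n → β // ∀ b, (univ.filter (fun i => f i = b)).card = c b})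
    (σ : ∀ b, Equiv.Perm (Fin (c b))) :
    Fin n ↪ (Σ b : β, Fin (c b)) := by
  refine ⟨fun i => ⟨f.1 i, (σ (f.1 i))
      (((univ.filter (fun j => f.1 j = f.1 i)).orderIsoOfFin (f.2 (f.1 i))).symm
        ⟨i, by simp⟩)⟩, ?_⟩
  intro i j hij
  set F : (Σ b : β, Fin (c b)) → ℕ := fun x =>
    ((((univ.filter (fun j => f.1 j = x.1)).orderIsoOfFin (f.2 x.1)))
      ((σ x.1).symm x.2)).1.1 with hF
  have hi : ∀ i : Fin n, F ⟨f.1 i, (σ (f.1 i))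
      (((univ.filter (fun j => f.1 j = f.1 i)).orderIsoOfFin (f.2 (f.1 i))).symm
        ⟨i, by simp⟩)⟩ = i := by
    intro i
    simp only [hF, Equiv.symm_apply_apply]
    rw [OrderIso.apply_symm_apply]
  have := (hi i).symm.trans ((congrArg F hij).trans (hi j))
  exact Fin.val_injective this

lemma count_fibers_le (h : ∑ b, c b = n) :
    Fintype.card {f : Fin n → β // ∀ b, (univ.filter (fun i => f i = b)).card = c b}
      * ∏ b, (c b).factorial ≤ n.factorial := by
  classical
  have key : Fintype.card ({f : Fin n → β // ∀ b, (univ.filter (fun i => f i = b)).card = c b}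
        × ∀ b, Equiv.Perm (Fin (c b)))
      ≤ Fintype.card (Fin n ↪ (Σ b : β, Fin (c b))) := by
    apply Fintype.card_le_of_injective (fun x => fiberEmb c x.1 x.2)
    rintro ⟨⟨f, hf⟩, σ⟩ ⟨⟨g, hg⟩, τ⟩ hfg
    have hfun : ∀ i, (fiberEmb c ⟨f, hf⟩ σ) i = (fiberEmb c ⟨g, hg⟩ τ) i := by
      intro i; exact DFunLike.congr_fun hfg i
    have hfg' : f = g := by
      funext i
      exact congrArg Sigma.fst (hfun i)
    subst hfg'
    have hστ : σ = τ := by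
      funext b
      ext x
      by_cases hb : (univ.filter (fun j => f j = b)).card = c b
      · obtain ⟨⟨i, him⟩, hix⟩ : ∃ y : {j // j ∈ univ.filter (fun j => f j = b)},
            y = ((univ.filter (fun j => f j = b)).orderIsoOfFin hb) x :=
          ⟨_, rfl⟩
        have hfib : f i = b := by simpa using him
        subst hfib
        have h2 := hfun i
        simp only [fiberEmb, Function.Embedding.coeFn_mk] at h2
        rw [Sigma.mk.inj_iff] at h2
        have h3 := eq_of_heq h2.2
        have hrank : ((univ.filter (fun j => f j = f i)).orderIsoOfFin (hf (f i))).symm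
            ⟨i, by simp⟩ = x := by
          apply_fun ((univ.filter (fun j => f j = f i)).orderIsoOfFin (hf (f i)))
          simp only [OrderIso.apply_symm_apply]
          rw [← hix]
        change (σ (f i)) (((univ.filter (fun j => f j = f i)).orderIsoOfFin (hf (f i))).symm
          ⟨i, by simp⟩) = (τ (f i)) (((univ.filter (fun j => f j = f i)).orderIsoOfFin
          (hf (f i))).symm ⟨i, by simp⟩) at h3
        rw [hrank] at h3
        exact congrArg Fin.val h3
      · exact absurd (hf b) hb
    rw [hστ]
  have hcard : Fintype.card (Σ b : β, Fin (c b)) = n := by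
    simp [Fintype.card_sigma, h]
  rw [Fintype.card_prod, Fintype.card_pi] at key
  simp only [Fintype.card_perm, Fintype.card_fin] at key
  rwa [Fintype.card_embedding_eq, hcard, Fintype.card_fin, Nat.descFactorial_self] at key

end General

section Helpers
variable {K q a₀ : ℕ}

lemma sum_eq_inr (x : Fin K ⊕ Unit) (h : x.isLeft = false) : x = Sum.inr () := by
  cases x with
  | inl a => simp at h
  | inr u => rfl

lemma isLeft_card {u : Fin q → Fin K ⊕ Unit} {m : ℕ}
    (h : (univ.filter fun i => (u i).isRight).card = m) (hq : q = m + a₀) :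
    (univ.filter fun i => (u i).isLeft).card = a₀ := by
  have h1 := Finset.card_filter_add_card_filter_not
    (s := (univ : Finset (Fin q))) (p := fun i => (u i).isLeft)
  have h2 : (univ.filter fun i => ¬ (u i).isLeft).card
      = (univ.filter fun i => (u i).isRight).card := by
    apply congrArg
    apply filter_congr
    intro i _
    simp [Sum.not_isLeft]
  simp only [card_univ, Fintype.card_fin] at h1
  omega

noncomputable def lab (u : Fin q → Fin K ⊕ Unit)
    (hL : (univ.filter fun i => (u i).isLeft).card = a₀) : Fin a₀ → Fin K :=
  fun j => (u ((univ.filter fun i => (u i).isLeft).orderEmbOfFin hL j)).getLeft (by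
    have h := Finset.orderEmbOfFin_mem (univ.filter fun i => (u i).isLeft) hL j
    simp only [Finset.mem_filter, Finset.mem_univ, true_and] at h
    exact h)

lemma lab_card (u : Fin q → Fin K ⊕ Unit)
    (hL : (univ.filter fun i => (u i).isLeft).card = a₀) (k : Fin K) :
    (univ.filter fun j => lab u hL j = k).card
      = (univ.filter fun i => u i = Sum.inl k).card := by
  set S := univ.filter fun i => (u i).isLeft with hS
  apply Finset.card_bij (fun j _ => S.orderEmbOfFin hL j)
  · intro j hj
    simp only [mem_filter, mem_univ, true_and] at hj ⊢
    exact Sum.eq_left_iff_getLeft_eq.mpr ⟨_, hj⟩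
  · intro j1 h1 j2 h2 hj
    exact (S.orderEmbOfFin hL).injective hj
  · intro i hi
    simp only [mem_filter, mem_univ, true_and] at hi
    have hiS : i ∈ S := by simp [hS, hi]
    obtain ⟨j, hj⟩ : ∃ j, S.orderEmbOfFin hL j = i := by
      have : i ∈ Set.range (S.orderEmbOfFin hL) := by
        rw [Finset.range_orderEmbOfFin]; exact hiS
      exact this
    refine ⟨j, ?_, hj⟩
    simp only [mem_filter, mem_univ, true_and, lab]
    have : u (S.orderEmbOfFin hL j) = Sum.inl k := by rw [hj]; exact hi
    rw [Sum.eq_left_iff_getLeft_eq] at this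
    obtain ⟨h', hval⟩ := this
    exact Finset.mem_filter.mpr ⟨mem_univ _, hval⟩

lemma lab_injective {u v : Fin q → Fin K ⊕ Unit}
    (hLu : (univ.filter fun i => (u i).isLeft).card = a₀)
    (hLv : (univ.filter fun i => (v i).isLeft).card = a₀)
    (hpat : ∀ i, (u i).isLeft = (v i).isLeft)
    (hlab : lab u hLu = lab v hLv) : u = v := by
  have hemb : ∀ j, (univ.filter fun i => (v i).isLeft).orderEmbOfFin hLv j
      = (univ.filter fun i => (u i).isLeft).orderEmbOfFin hLu j := by
    have hf := Finset.orderEmbOfFin_unique (s := univ.filter fun i => (v i).isLeft) hLv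
      (f := fun j => (univ.filter fun i => (u i).isLeft).orderEmbOfFin hLu j)
      (fun x => by
        have := Finset.orderEmbOfFin_mem (univ.filter fun i => (u i).isLeft) hLu x
        simp only [mem_filter, mem_univ, true_and] at this ⊢
        rw [← hpat]; exact this)
      ((univ.filter fun i => (u i).isLeft).orderEmbOfFin hLu).strictMono
    exact fun j => (congrFun hf j).symm
  funext i
  by_cases h : (u i).isLeft
  · have hiS : i ∈ univ.filter fun i' => (u i').isLeft := by simp [h]
    obtain ⟨j, hj⟩ : ∃ j, (univ.filter fun i' => (u i').isLeft).orderEmbOfFin hLu j = i := by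
      have : i ∈ Set.range ((univ.filter fun i' => (u i').isLeft).orderEmbOfFin hLu) := by
        rw [Finset.range_orderEmbOfFin]; exact hiS
      exact this
    subst hj
    have h1 : u ((univ.filter fun i' => (u i').isLeft).orderEmbOfFin hLu j)
        = Sum.inl (lab u hLu j) :=
      Sum.eq_left_iff_getLeft_eq.mpr ⟨_, rfl⟩
    have h2 : v ((univ.filter fun i' => (v i').isLeft).orderEmbOfFin hLv j)
        = Sum.inl (lab v hLv j) :=
      Sum.eq_left_iff_getLeft_eq.mpr ⟨_, rfl⟩
    rw [hemb j] at h2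
    rw [h1, h2, hlab]
  · have hv : (v i).isLeft = false := by rw [← hpat]; simpa using h
    rw [sum_eq_inr (u i) (by simpa using h), sum_eq_inr (v i) hv]

end Helpers

section PatCards
variable {K q a₀ : ℕ}

lemma not_isLeft_card {u : Fin q → Fin K ⊕ Unit} {m : ℕ}
    (h : (univ.filter fun i => (u i).isRight).card = m) :
    (univ.filter fun i => ¬ (u i).isLeft).card = m := by
  rw [← h]
  apply congrArg
  apply filter_congr
  intro i _
  simp [Sum.not_isLeft]

lemma pat_cards (m r : ℕ) (hq : q = m + a₀) (hr₂ : r ≤ a₀)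
    {u v : Fin q → Fin K ⊕ Unit}
    (hu : (univ.filter fun i => (u i).isRight).card = m)
    (hv : (univ.filter fun i => (v i).isRight).card = m)
    (hr : (univ.filter fun i => (u i).isLeft ∧ (v i).isLeft).card = r) :
    ∀ bb : Bool × Bool, (univ.filter fun i => ((u i).isLeft, (v i).isLeft) = bb).card
      = (if bb.1 then (if bb.2 then r else a₀ - r)
          else (if bb.2 then a₀ - r else m - (a₀ - r))) := by
  have hLu := isLeft_card (a₀ := a₀) hu hq
  have hLv := isLeft_card (a₀ := a₀) hv hq
  have hNu := not_isLeft_card hu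
  have e1 : (univ.filter fun i => (u i).isLeft ∧ (v i).isLeft).card
      + (univ.filter fun i => (u i).isLeft ∧ ¬ (v i).isLeft).card
      = (univ.filter fun i => (u i).isLeft).card := by
    have := Finset.card_filter_add_card_filter_not
      (s := univ.filter fun i => (u i).isLeft) (p := fun i => (v i).isLeft)
    rw [Finset.filter_filter, Finset.filter_filter] at this
    exact this
  have e2 : (univ.filter fun i => (v i).isLeft ∧ (u i).isLeft).card
      + (univ.filter fun i => (v i).isLeft ∧ ¬ (u i).isLeft).card
      = (univ.filter fun i => (v i).isLeft).card := by
    have := Finset.card_filter_add_card_filter_not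
      (s := univ.filter fun i => (v i).isLeft) (p := fun i => (u i).isLeft)
    rw [Finset.filter_filter, Finset.filter_filter] at this
    exact this
  have e2' : (univ.filter fun i => (v i).isLeft ∧ (u i).isLeft).card = r := by
    rw [← hr]; apply congrArg; apply filter_congr; intro i _; exact and_comm
  have e3 : (univ.filter fun i => ¬ (u i).isLeft ∧ (v i).isLeft).card
      + (univ.filter fun i => ¬ (u i).isLeft ∧ ¬ (v i).isLeft).card
      = (univ.filter fun i => ¬ (u i).isLeft).card := by
    have := Finset.card_filter_add_card_filter_not
      (s := univ.filter fun i => ¬ (u i).isLeft) (p := fun i => (v i).isLeft)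
    rw [Finset.filter_filter, Finset.filter_filter] at this
    exact this
  have e3' : (univ.filter fun i => ¬ (u i).isLeft ∧ (v i).isLeft).card
      = (univ.filter fun i => (v i).isLeft ∧ ¬ (u i).isLeft).card := by
    apply congrArg; apply filter_congr; intro i _; exact and_comm
  rintro ⟨b1, b2⟩
  have key : ∀ (P : Fin q → Prop) [DecidablePred P], (∀ i, ((((u i).isLeft, (v i).isLeft) :
      Bool × Bool) = (b1, b2)) ↔ P i) →
      (univ.filter fun i => ((u i).isLeft, (v i).isLeft) = (b1, b2)).card
        = (univ.filter P).card := by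
    intro P _ hP
    apply congrArg
    apply filter_congr
    intro i _
    exact hP i
  cases b1 <;> cases b2 <;> simp only [if_true, if_false, Bool.false_eq_true, ite_true, ite_false]
  · rw [key (fun i => ¬ (u i).isLeft ∧ ¬ (v i).isLeft) (fun i => by
      simp [Prod.ext_iff])]
    omega
  · rw [key (fun i => ¬ (u i).isLeft ∧ (v i).isLeft) (fun i => by
      simp [Prod.ext_iff, and_comm])]
    rw [e3']
    omega
  · rw [key (fun i => (u i).isLeft ∧ ¬ (v i).isLeft) (fun i => by
      simp [Prod.ext_iff])]
    omega
  · rw [key (fun i => (u i).isLeft ∧ (v i).isLeft) (fun i => by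
      simp [Prod.ext_iff])]
    exact hr

end PatCards

/-- Counting bound underlying the diagram formula: among the terms of the Hermite diagram
expansion — pairs of index sequences `(l, t)` of length `q = m + a₀`, each taking each A-type
value `k` exactly `a k` times and the B-type value exactly `m` times — the number with exactly
`r` positions pairing an A-type `l`-index with an A-type `t`-index is at most
`(a₀!/∏ₖ a[k]!)² (m+a₀)! / (r! ((a₀-r)!)² (m-a₀+r)!)`. -/
theorem stmt_7 (K : ℕ) (a : Fin K → ℕ) (a₀ m r : ℕ) (ha₀ : a₀ = ∑ k, a k)
    (hr₁ : a₀ - m ≤ r) (hr₂ : r ≤ a₀) :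
    (Fintype.card {lt : (Fin (m + a₀) → Fin K ⊕ Unit) × (Fin (m + a₀) → Fin K ⊕ Unit) //
        (∀ k : Fin K,
          (Finset.univ.filter (fun i => lt.1 i = Sum.inl k)).card = a k ∧
          (Finset.univ.filter (fun i => lt.2 i = Sum.inl k)).card = a k) ∧
        (Finset.univ.filter (fun i => (lt.1 i).isRight)).card = m ∧
        (Finset.univ.filter (fun i => (lt.2 i).isRight)).card = m ∧
        (Finset.univ.filter (fun i => (lt.1 i).isLeft ∧ (lt.2 i).isLeft)).card = r} : ℝ) ≤
      ((a₀.factorial : ℝ) / ∏ k, ((a k).factorial : ℝ)) ^ 2 *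
        ((m + a₀).factorial : ℝ) /
          ((r.factorial : ℝ) * (a₀ - r).factorial * (a₀ - r).factorial *
            (m - (a₀ - r)).factorial) := by
  classical
  set c : Bool × Bool → ℕ := fun bb =>
    if bb.1 then (if bb.2 then r else a₀ - r)
    else (if bb.2 then a₀ - r else m - (a₀ - r)) with hc
  have hsum_c : ∑ bb : Bool × Bool, c bb = m + a₀ := by
    simp [hc, Fintype.sum_prod_type]
    omega
  have hPat := count_fibers_le (β := Bool × Bool) (n := m + a₀) c hsum_c
  have hLc := count_fibers_le (β := Fin K) (n := a₀) a ha₀.symm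
  set PatT := {p : Fin (m + a₀) → Bool × Bool //
    ∀ bb, (univ.filter (fun i => p i = bb)).card = c bb} with hPatT
  set LT := {f : Fin a₀ → Fin K //
    ∀ k, (univ.filter (fun i => f i = k)).card = a k} with hLT
  have hinj : Fintype.card {lt : (Fin (m + a₀) → Fin K ⊕ Unit) × (Fin (m + a₀) → Fin K ⊕ Unit) //
        (∀ k : Fin K,
          (Finset.univ.filter (fun i => lt.1 i = Sum.inl k)).card = a k ∧
          (Finset.univ.filter (fun i => lt.2 i = Sum.inl k)).card = a k) ∧
        (Finset.univ.filter (fun i => (lt.1 i).isRight)).card = m ∧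
        (Finset.univ.filter (fun i => (lt.2 i).isRight)).card = m ∧
        (Finset.univ.filter (fun i => (lt.1 i).isLeft ∧ (lt.2 i).isLeft)).card = r}
      ≤ Fintype.card (PatT × LT × LT) := by
    apply Fintype.card_le_of_injective (fun x =>
      (⟨fun i => ((x.1.1 i).isLeft, (x.1.2 i).isLeft),
          pat_cards m r rfl hr₂ x.2.2.1 x.2.2.2.1 x.2.2.2.2⟩,
       ⟨lab x.1.1 (isLeft_card x.2.2.1 rfl),
          fun k => (lab_card _ _ k).trans (x.2.1 k).1⟩,
       ⟨lab x.1.2 (isLeft_card x.2.2.2.1 rfl),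
          fun k => (lab_card _ _ k).trans (x.2.1 k).2⟩))
    rintro ⟨⟨u1, u2⟩, hux⟩ ⟨⟨v1, v2⟩, hvy⟩ h
    simp only [Prod.mk.injEq] at h
    obtain ⟨hp0, hl10, hl20⟩ := h
    have hp := congrArg Subtype.val hp0
    have hl1 := congrArg Subtype.val hl10
    have hl2 := congrArg Subtype.val hl20
    simp only at hp hl1 hl2
    have hpat1 : ∀ i, (u1 i).isLeft = (v1 i).isLeft := by
      intro i
      have h' := congrFun hp i
      exact congrArg Prod.fst h'
    have hpat2 : ∀ i, (u2 i).isLeft = (v2 i).isLeft := by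
      intro i
      have h' := congrFun hp i
      exact congrArg Prod.snd h'
    have h1 : u1 = v1 := lab_injective _ _ hpat1 hl1
    have h2 : u2 = v2 := lab_injective _ _ hpat2 hl2
    apply Subtype.ext
    simp [h1, h2]
  simp only [← Nat.card_eq_fintype_card] at hPat hLc hinj ⊢
  rw [Nat.card_prod, Nat.card_prod] at hinj
  set N := Nat.card {lt : (Fin (m + a₀) → Fin K ⊕ Unit) × (Fin (m + a₀) → Fin K ⊕ Unit) //
        (∀ k : Fin K,
          (Finset.univ.filter (fun i => lt.1 i = Sum.inl k)).card = a k ∧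
          (Finset.univ.filter (fun i => lt.2 i = Sum.inl k)).card = a k) ∧
        (Finset.univ.filter (fun i => (lt.1 i).isRight)).card = m ∧
        (Finset.univ.filter (fun i => (lt.2 i).isRight)).card = m ∧
        (Finset.univ.filter (fun i => (lt.1 i).isLeft ∧ (lt.2 i).isLeft)).card = r} with hN
  set P := Nat.card PatT
  set L := Nat.card LT
  set D := ∏ bb : Bool × Bool, (c bb).factorial with hD
  set E := ∏ k, (a k).factorial with hE
  have keynat : N * (D * (E * E)) ≤ (m + a₀).factorial * (a₀.factorial * a₀.factorial) := by
    calc N * (D * (E * E)) ≤ (P * (L * L)) * (D * (E * E)) :=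
          Nat.mul_le_mul_right _ hinj
      _ = (P * D) * ((L * E) * (L * E)) := by ring
      _ ≤ (m + a₀).factorial * (a₀.factorial * a₀.factorial) :=
          Nat.mul_le_mul hPat (Nat.mul_le_mul hLc hLc)
  have hDval : (D : ℝ) = (r.factorial : ℝ) * (a₀ - r).factorial * (a₀ - r).factorial *
      (m - (a₀ - r)).factorial := by
    have : D = r.factorial * ((a₀ - r).factorial * ((a₀ - r).factorial *
        (m - (a₀ - r)).factorial)) := by
      simp [hD, hc, Fintype.prod_prod_type]
      ring
    rw [this]
    push_cast
    ring
  have hEval : (E : ℝ) = ∏ k, ((a k).factorial : ℝ) := by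
    simp [hE]
  have hDpos : (0:ℝ) < (D : ℝ) := by
    rw [hDval]; positivity
  have hEpos : (0:ℝ) < (E : ℝ) := by
    have : 0 < E := Finset.prod_pos fun k _ => Nat.factorial_pos _
    exact_mod_cast this
  have hreal : (N : ℝ) * ((D : ℝ) * ((E:ℝ) * (E:ℝ)))
      ≤ ((m + a₀).factorial : ℝ) * ((a₀.factorial : ℝ) * (a₀.factorial : ℝ)) := by
    exact_mod_cast keynat
  rw [← hDval, ← hEval]
  have hrw : ((a₀.factorial : ℝ) / (E:ℝ)) ^ 2 * ((m + a₀).factorial : ℝ) / (D:ℝ)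
      = (((m + a₀).factorial : ℝ) * ((a₀.factorial : ℝ) * (a₀.factorial : ℝ)))
        / ((D : ℝ) * ((E:ℝ) * (E:ℝ))) := by
    field_simp
  rw [hrw, le_div_iff₀ (by positivity)]
  exact hreal
end
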